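/- Let n, M be natural numbers with 1 ≤ n ≤ M, let 0 < η ≤ 1 and 0 < Q ≤ 1, and suppose Q ≤ (M! / (M − n)!) · η^n / M^n and n·ln(η) − ln(Q) > 0. Then the number of detector elements satisfies M ≥ n(n − 1) / (2·(n·ln(η) − ln(Q))). -/

import Mathlib

/-- quadratic scaling of the number of detector elements.  If
`1 ≤ n ≤ M`, `0 < η ≤ 1`, `0 < Q ≤ 1`, `Q ≤ (M!/(M-n)!) · η^n / M^n`
(the probability that a spatial array of `M` ideal click detectors outputs
`n` on `n` input photons), and `n·ln(η) − ln(Q) > 0`, then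
`M ≥ n(n−1) / (2(n·ln(η) − ln(Q)))`. -/
theorem detector_number_quadratic_scaling
    (n M : ℕ) (hn : 1 ≤ n) (hnM : n ≤ M) (η Q : ℝ)
    (hη0 : 0 < η) (hη1 : η ≤ 1) (hQ0 : 0 < Q) (hQ1 : Q ≤ 1)
    (hQle : Q ≤ (M.descFactorial n : ℝ) * η ^ n / (M : ℝ) ^ n)
    (hpos : 0 < (n : ℝ) * Real.log η - Real.log Q) :
    (M : ℝ) ≥ (n : ℝ) * ((n : ℝ) - 1) /
      (2 * ((n : ℝ) * Real.log η - Real.log Q)) := by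
  have hM0 : (0:ℝ) < M := by
    have : (1:ℕ) ≤ M := hn.trans hnM
    exact_mod_cast Nat.lt_of_lt_of_le Nat.zero_lt_one this
  have hterm : ∀ i ∈ Finset.range n, (0:ℝ) < (M:ℝ) - i := by
    intro i hi
    have h1 : i < M := lt_of_lt_of_le (Finset.mem_range.mp hi) hnM
    have h2 : (i:ℝ) < M := by exact_mod_cast h1
    linarith
  have hP : (M.descFactorial n : ℝ) = ∏ i ∈ Finset.range n, ((M:ℝ) - i) := by
    rw [Nat.descFactorial_eq_prod_range, Nat.cast_prod]
    refine Finset.prod_congr rfl fun i hi => ?_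
    rw [Nat.cast_sub (le_of_lt (lt_of_lt_of_le (Finset.mem_range.mp hi) hnM))]
  have hPpos : (0:ℝ) < ∏ i ∈ Finset.range n, ((M:ℝ) - i) :=
    Finset.prod_pos hterm
  -- take logs
  have h1 : Real.log Q ≤ Real.log ((M.descFactorial n : ℝ) * η ^ n / (M : ℝ) ^ n) :=
    Real.log_le_log hQ0 hQle
  have h2 : Real.log ((M.descFactorial n : ℝ) * η ^ n / (M : ℝ) ^ n)
      = (∑ i ∈ Finset.range n, Real.log ((M:ℝ) - i)) + n * Real.log η
        - n * Real.log M := by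
    rw [hP, Real.log_div (by positivity) (by positivity),
      Real.log_mul (ne_of_gt hPpos) (by positivity),
      Real.log_pow, Real.log_pow,
      Real.log_prod (fun i hi => ne_of_gt (hterm i hi))]
  -- termwise bound: i/M ≤ log M − log (M − i)
  have h3 : ∀ i ∈ Finset.range n,
      (i:ℝ)/M ≤ Real.log M - Real.log ((M:ℝ) - i) := by
    intro i hi
    have hpos' : (0:ℝ) < ((M:ℝ) - i) / M := div_pos (hterm i hi) hM0
    have hlog := Real.log_le_sub_one_of_pos hpos'
    rw [Real.log_div (ne_of_gt (hterm i hi)) (ne_of_gt hM0)] at hlog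
    have heq : ((M:ℝ) - i)/M - 1 = -((i:ℝ)/M) := by
      field_simp
      ring
    linarith [heq ▸ hlog]
  have h4 : (∑ i ∈ Finset.range n, (i:ℝ)/M)
      ≤ ∑ i ∈ Finset.range n, (Real.log M - Real.log ((M:ℝ) - i)) :=
    Finset.sum_le_sum h3
  have h5 : ∑ i ∈ Finset.range n, (Real.log M - Real.log ((M:ℝ) - i))
      = n * Real.log M - ∑ i ∈ Finset.range n, Real.log ((M:ℝ) - i) := by
    rw [Finset.sum_sub_distrib, Finset.sum_const, Finset.card_range,
      nsmul_eq_mul]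
  have hsum : ∑ i ∈ Finset.range n, (i:ℝ) = n * ((n:ℝ) - 1) / 2 := by
    have := Finset.sum_range_id_mul_two n
    have hc : ((∑ i ∈ Finset.range n, i : ℕ) : ℝ) * 2 = (n:ℝ) * ((n:ℝ) - 1) := by
      rw [← Nat.cast_ofNat, ← Nat.cast_mul, this, Nat.cast_mul,
        Nat.cast_sub hn]
      push_cast; ring
    rw [Nat.cast_sum] at hc
    linarith
  have h6 : (n:ℝ) * ((n:ℝ) - 1) / 2 / M
      ≤ (n : ℝ) * Real.log η - Real.log Q := by
    have : (∑ i ∈ Finset.range n, (i:ℝ)/M)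
        = (∑ i ∈ Finset.range n, (i:ℝ)) / M := by
      rw [Finset.sum_div]
    rw [this, hsum] at h4
    rw [h2] at h1
    linarith [h4, h5 ▸ h4]
  -- conclude
  rw [ge_iff_le, div_le_iff₀ (by positivity)]
  have hnn : (0:ℝ) ≤ (n:ℝ) * ((n:ℝ) - 1) := by
    have : (1:ℝ) ≤ n := by exact_mod_cast hn
    nlinarith
  rw [div_le_iff₀ hM0] at h6
  nlinarith [h6, hM0, hpos]
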